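/- Let 1 → N → G →^π Q → 1 be a group extension and M a G-module. Let 0 → M → E_M → ℤ → 0 be an extension of N-modules, and fix an N-module map ν : ℤG → E_M lifting the identity of ℤ (i.e. p_M ∘ ν = ε), with restriction μ : IG → M. For q ∈ Q choose x ∈ G with π(x) = q and set d(q) = α_x ∘ μ ∘ α_x⁻¹ − μ ∈ Hom_N(IG, M), where α_x denotes the action of x on IG and on M. Then d(q) does not depend on the choice of x with π(x) = q. -/

import Mathlib

/-- The augmentation map `ε : ℤG → ℤ`. -/
noncomputable def aug (G : Type*) [Group G] : MonoidAlgebra ℤ G →ₐ[ℤ] ℤ :=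
  MonoidAlgebra.lift ℤ ℤ G 1

/-- The augmentation ideal `IG = ker ε`. -/
noncomputable def augIdeal (G : Type*) [Group G] : Ideal (MonoidAlgebra ℤ G) :=
  RingHom.ker (aug G).toRingHom

set_option maxHeartbeats 1000000

/-- Let `1 → N → G →^π Q → 1` be a group extension (`N = ker π`) and `M` a `G`-module.
Let `0 → M →ᶦ E →ᵖ ℤ → 0` be an extension of `N`-modules (the `N`-action on `E` is given
by `ρ`, compatible with `i`, `p` and the `N`-action on `M`), and fix an `N`-equivariant
additive lift `ν : ℤG → E` of the identity of `ℤ` (`p ∘ ν = ε`), with restriction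
`μ : IG → M` (i.e. `i ∘ μ = ν` on `IG`).  For `q ∈ Q` choose `x ∈ G` with `π x = q` and
set `d(q) = α_x ∘ μ ∘ α_{x⁻¹} - μ` where `α_x` is the action of `x` on `IG`
(left multiplication) and on `M`.  Then `d(q)` does not depend on the choice of `x`. -/
theorem d_two_well_defined {G Q M E : Type*} [Group G] [Group Q] [AddCommGroup M]
    [DistribMulAction G M] [AddCommGroup E]
    (π : G →* Q) (hπ : Function.Surjective π)
    (i : M →+ E) (p : E →+ ℤ)
    (hi : Function.Injective i) (hp : Function.Surjective p)
    (hex : ∀ e : E, p e = 0 ↔ ∃ m : M, i m = e)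
    (ρ : G → E → E)
    (hρ_add : ∀ n ∈ π.ker, ∀ e e' : E, ρ n (e + e') = ρ n e + ρ n e')
    (hρ_mul : ∀ n ∈ π.ker, ∀ n' ∈ π.ker, ∀ e : E, ρ (n * n') e = ρ n (ρ n' e))
    (hρ_one : ∀ e : E, ρ 1 e = e)
    (hρ_i : ∀ n ∈ π.ker, ∀ m : M, ρ n (i m) = i (n • m))
    (hρ_p : ∀ n ∈ π.ker, ∀ e : E, p (ρ n e) = p e)
    (ν : MonoidAlgebra ℤ G →+ E)
    (hν_equiv : ∀ n ∈ π.ker, ∀ a : MonoidAlgebra ℤ G,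
      ν (MonoidAlgebra.of ℤ G n * a) = ρ n (ν a))
    (hν_lift : ∀ a : MonoidAlgebra ℤ G, p (ν a) = aug G a)
    (μ : augIdeal G → M)
    (hμ : ∀ a : augIdeal G, i (μ a) = ν ↑a) :
    ∀ x y : G, π x = π y →
      ∀ a : augIdeal G,
        x • μ ⟨MonoidAlgebra.of ℤ G x⁻¹ * ↑a, (augIdeal G).mul_mem_left (MonoidAlgebra.of ℤ G x⁻¹) a.2⟩ - μ a
          = y • μ ⟨MonoidAlgebra.of ℤ G y⁻¹ * ↑a, (augIdeal G).mul_mem_left (MonoidAlgebra.of ℤ G y⁻¹) a.2⟩ - μ a := by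
  have key : ∀ n ∈ π.ker, ∀ c : MonoidAlgebra ℤ G, ∀ hc : c ∈ augIdeal G,
      ∀ h2 : MonoidAlgebra.of ℤ G n * c ∈ augIdeal G,
      μ ⟨MonoidAlgebra.of ℤ G n * c, h2⟩ = n • μ ⟨c, hc⟩ := by
    intro n hn c hc h2
    apply hi
    have e1 : i (μ ⟨MonoidAlgebra.of ℤ G n * c, h2⟩) = ν (MonoidAlgebra.of ℤ G n * c) := hμ _
    have e2 : i (μ ⟨c, hc⟩) = ν c := hμ _
    rw [e1, hν_equiv n hn, ← e2, hρ_i n hn]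
  have hμcong : ∀ c c' : MonoidAlgebra ℤ G, c = c' →
      ∀ hc : c ∈ augIdeal G, ∀ hc' : c' ∈ augIdeal G, μ ⟨c, hc⟩ = μ ⟨c', hc'⟩ := by
    rintro c c' rfl hc hc'
    rfl
  intro x y hxy a
  obtain ⟨a, ha⟩ := a
  have hn : x⁻¹ * y ∈ π.ker := by simp [MonoidHom.mem_ker, hxy]
  have hG : x⁻¹ * y * y⁻¹ = x⁻¹ := by group
  have hel : MonoidAlgebra.of ℤ G (x⁻¹ * y) * (MonoidAlgebra.of ℤ G y⁻¹ * a)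
      = MonoidAlgebra.of ℤ G x⁻¹ * a := by
    rw [← mul_assoc, ← map_mul, hG]
  have hY : MonoidAlgebra.of ℤ G y⁻¹ * a ∈ augIdeal G := (augIdeal G).mul_mem_left _ ha
  have hX : MonoidAlgebra.of ℤ G x⁻¹ * a ∈ augIdeal G := (augIdeal G).mul_mem_left _ ha
  have h2 : MonoidAlgebra.of ℤ G (x⁻¹ * y) * (MonoidAlgebra.of ℤ G y⁻¹ * a) ∈ augIdeal G :=
    (augIdeal G).mul_mem_left _ hY
  have h3 := key _ hn _ hY h2
  have h4 := hμcong _ _ hel h2 hX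
  have goalx : x • μ ⟨MonoidAlgebra.of ℤ G x⁻¹ * a, hX⟩
      = y • μ ⟨MonoidAlgebra.of ℤ G y⁻¹ * a, hY⟩ := by
    rw [← h4, h3, smul_smul]
    congr 1
    group
  rw [sub_left_inj]
  exact goalx
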